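/- arXiv:2004.09696 — 3 statements merged into one kernel-verified Lean document; each statement's English description precedes it below -/
import Mathlib

section
/- Let 0 < α < 1, let 0 < r < r₀, and let M : (0, r₀] → ℝ be a nondecreasing function with M(t) > 0 for all t, M(r₀) ≤ 1, and let κ : (0, r₀] → ℝ satisfy (log M(t))/t - (log M(α t))/t ≥ κ(t)/t for all t ∈ (r, r₀]. Then ∫_{r}^{r₀} κ(t)/t dt ≤ (log M(r₀) - log M(α r)) · log(1/α), and consequently M(α r) ≤ exp( - (1/log(1/α)) ∫_{r}^{r₀} κ(t)/t dt ). -/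
open MeasureTheory intervalIntegral

theorem integration_step (α r r₀ : ℝ) (M κ : ℝ → ℝ)
    (hα : 0 < α) (hα1 : α < 1) (hr : 0 < r) (hrr₀ : r < r₀)
    (hMono : MonotoneOn M (Set.Ioc 0 r₀))
    (hMpos : ∀ t ∈ Set.Ioc (0:ℝ) r₀, 0 < M t)
    (hMr₀ : M r₀ ≤ 1)
    (hκ : ∀ t ∈ Set.Ioc r r₀,
      Real.log (M t) / t - Real.log (M (α * t)) / t ≥ κ t / t) :
    (∫ t in r..r₀, κ t / t) ≤
        (Real.log (M r₀) - Real.log (M (α * r))) * Real.log (1 / α) ∧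
      M (α * r) ≤
        Real.exp (-(1 / Real.log (1 / α)) * ∫ t in r..r₀, κ t / t) := by
  have hr₀ : (0:ℝ) < r₀ := hr.trans hrr₀
  have hαr : 0 < α * r := mul_pos hα hr
  have hαrr : α * r < r := by nlinarith
  have hαr₀r₀ : α * r₀ < r₀ := by nlinarith
  have hαrαr₀ : α * r ≤ α * r₀ := by nlinarith
  have hL : Real.log (1 / α) = -Real.log α := by
    rw [one_div, Real.log_inv]
  have hLpos : 0 < Real.log (1 / α) := by
    rw [hL]; linarith [Real.log_neg hα hα1]
  have hαrmem : α * r ∈ Set.Ioc (0:ℝ) r₀ := ⟨hαr, by linarith⟩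
  have hr₀mem : r₀ ∈ Set.Ioc (0:ℝ) r₀ := ⟨hr₀, le_rfl⟩
  have hlogle : Real.log (M (α * r)) ≤ Real.log (M r₀) :=
    Real.log_le_log (hMpos _ hαrmem) (hMono hαrmem hr₀mem (by linarith))
  have hlogr₀ : Real.log (M r₀) ≤ 0 := Real.log_nonpos (hMpos _ hr₀mem).le hMr₀
  set g : ℝ → ℝ := fun u => Real.log (M u) / u with hg
  -- integrability of g on subintervals of [α*r, r₀]
  have hgint : ∀ a b : ℝ, α * r ≤ a → a ≤ b → b ≤ r₀ →
      IntervalIntegrable g volume a b := by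
    intro a b ha hab hb
    have huIcc : Set.uIcc a b = Set.Icc a b := Set.uIcc_of_le hab
    have hsub : Set.uIcc a b ⊆ Set.Ioc 0 r₀ := by
      rw [huIcc]; intro x hx; exact ⟨lt_of_lt_of_le (by linarith) hx.1, hx.2.trans hb⟩
    have hm : MonotoneOn (fun u => Real.log (M u)) (Set.uIcc a b) := by
      intro x hx y hy hxy
      exact Real.log_le_log (hMpos _ (hsub hx)) (hMono (hsub hx) (hsub hy) hxy)
    have : IntervalIntegrable (fun u => Real.log (M u) * u⁻¹) volume a b := by
      apply hm.intervalIntegrable.mul_continuousOn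
      apply ContinuousOn.inv₀ continuousOn_id
      intro x hx
      exact ne_of_gt (lt_of_lt_of_le (by linarith) ((huIcc ▸ hx).1))
    simpa [hg, div_eq_mul_inv] using this
  have hgint1 : IntervalIntegrable g volume r r₀ :=
    hgint r r₀ hαrr.le hrr₀.le le_rfl
  -- integrability of t ↦ log (M (α t)) / t on [r, r₀]
  have hg2int : IntervalIntegrable (fun t => Real.log (M (α * t)) / t) volume r r₀ := by
    have huIcc : Set.uIcc r r₀ = Set.Icc r r₀ := Set.uIcc_of_le hrr₀.le
    have hsub : ∀ x ∈ Set.uIcc r r₀, α * x ∈ Set.Ioc (0:ℝ) r₀ := by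
      intro x hx
      rw [huIcc] at hx
      exact ⟨mul_pos hα (by linarith [hx.1]), by nlinarith [hx.2]⟩
    have hm : MonotoneOn (fun t => Real.log (M (α * t))) (Set.uIcc r r₀) := by
      intro x hx y hy hxy
      exact Real.log_le_log (hMpos _ (hsub x hx))
        (hMono (hsub x hx) (hsub y hy) (by nlinarith))
    have : IntervalIntegrable (fun t => Real.log (M (α * t)) * t⁻¹) volume r r₀ := by
      apply hm.intervalIntegrable.mul_continuousOn
      apply ContinuousOn.inv₀ continuousOn_id
      intro x hx
      exact ne_of_gt (lt_of_lt_of_le hr ((huIcc ▸ hx).1))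
    simpa [div_eq_mul_inv] using this
  have hdiffint : IntervalIntegrable (fun t => g t - Real.log (M (α * t)) / t) volume r r₀ :=
    hgint1.sub hg2int
  -- change of variables
  have hcov : (∫ t in r..r₀, Real.log (M (α * t)) / t) = ∫ u in α * r..α * r₀, g u := by
    have h1 : (∫ t in r..r₀, Real.log (M (α * t)) / t) = ∫ t in r..r₀, α * g (α * t) := by
      apply intervalIntegral.integral_congr
      intro t ht
      rw [Set.uIcc_of_le hrr₀.le] at ht
      have ht0 : t ≠ 0 := ne_of_gt (lt_of_lt_of_le hr ht.1)
      simp only [hg]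
      field_simp
    rw [h1, intervalIntegral.integral_const_mul,
      intervalIntegral.integral_comp_mul_left g (ne_of_gt hα), smul_eq_mul]
    rw [← mul_assoc, mul_inv_cancel₀ (ne_of_gt hα), one_mul]
  -- splitting
  have hsplit : (∫ t in r..r₀, g t) - (∫ u in α * r..α * r₀, g u)
      = (∫ u in α * r₀..r₀, g u) - ∫ u in α * r..r, g u := by
    have h1 : (∫ u in α * r..α * r₀, g u) + (∫ u in α * r₀..r₀, g u) = ∫ u in α * r..r₀, g u :=
      intervalIntegral.integral_add_adjacent_intervals
        (hgint _ _ le_rfl hαrαr₀ hαr₀r₀.le) (hgint _ _ (by linarith) hαr₀r₀.le le_rfl)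
    have h2 : (∫ u in α * r..r, g u) + (∫ u in r..r₀, g u) = ∫ u in α * r..r₀, g u :=
      intervalIntegral.integral_add_adjacent_intervals
        (hgint _ _ le_rfl hαrr.le (by linarith)) hgint1
    linarith
  -- upper bound on the right piece
  have hub : (∫ u in α * r₀..r₀, g u) ≤ Real.log (M r₀) * Real.log (1 / α) := by
    have hmono : (∫ u in α * r₀..r₀, g u) ≤ ∫ u in α * r₀..r₀, Real.log (M r₀) * u⁻¹ := by
      apply intervalIntegral.integral_mono_on hαr₀r₀.le
        (hgint _ _ (by linarith) hαr₀r₀.le le_rfl)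
      · apply ContinuousOn.intervalIntegrable
        apply ContinuousOn.mul continuousOn_const
        apply ContinuousOn.inv₀ continuousOn_id
        intro x hx
        rw [Set.uIcc_of_le hαr₀r₀.le] at hx
        exact ne_of_gt (lt_of_lt_of_le (mul_pos hα hr₀) hx.1)
      · intro x hx
        have hx0 : 0 < x := lt_of_lt_of_le (mul_pos hα hr₀) hx.1
        have hxmem : x ∈ Set.Ioc (0:ℝ) r₀ := ⟨hx0, hx.2⟩
        have : Real.log (M x) ≤ Real.log (M r₀) :=
          Real.log_le_log (hMpos _ hxmem) (hMono hxmem hr₀mem hx.2)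
        show Real.log (M x) / x ≤ _
        rw [div_eq_mul_inv]
        exact mul_le_mul_of_nonneg_right this (inv_nonneg.2 hx0.le)
    rw [intervalIntegral.integral_const_mul,
      integral_inv_of_pos (mul_pos hα hr₀) hr₀] at hmono
    have : r₀ / (α * r₀) = 1 / α := by field_simp
    rwa [this] at hmono
  -- lower bound on the left piece
  have hlb : Real.log (M (α * r)) * Real.log (1 / α) ≤ ∫ u in α * r..r, g u := by
    have hmono : (∫ u in α * r..r, Real.log (M (α * r)) * u⁻¹) ≤ ∫ u in α * r..r, g u := by
      apply intervalIntegral.integral_mono_on hαrr.le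
      · apply ContinuousOn.intervalIntegrable
        apply ContinuousOn.mul continuousOn_const
        apply ContinuousOn.inv₀ continuousOn_id
        intro x hx
        rw [Set.uIcc_of_le hαrr.le] at hx
        exact ne_of_gt (lt_of_lt_of_le hαr hx.1)
      · exact hgint _ _ le_rfl hαrr.le (by linarith)
      · intro x hx
        have hx0 : 0 < x := lt_of_lt_of_le hαr hx.1
        have hxmem : x ∈ Set.Ioc (0:ℝ) r₀ := ⟨hx0, by linarith [hx.2]⟩
        have : Real.log (M (α * r)) ≤ Real.log (M x) :=
          Real.log_le_log (hMpos _ hαrmem) (hMono hαrmem hxmem hx.1)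
        show _ ≤ Real.log (M x) / x
        rw [div_eq_mul_inv]
        exact mul_le_mul_of_nonneg_right this (inv_nonneg.2 hx0.le)
    rw [intervalIntegral.integral_const_mul, integral_inv_of_pos hαr hr] at hmono
    have : r / (α * r) = 1 / α := by field_simp
    rwa [this] at hmono
  -- the main inequality
  have main : (∫ t in r..r₀, κ t / t) ≤
      (Real.log (M r₀) - Real.log (M (α * r))) * Real.log (1 / α) := by
    by_cases hint : IntervalIntegrable (fun t => κ t / t) volume r r₀
    · have step1 : (∫ t in r..r₀, κ t / t)
          ≤ ∫ t in r..r₀, (g t - Real.log (M (α * t)) / t) := by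
        apply intervalIntegral.integral_mono_ae_restrict hrr₀.le hint hdiffint
        have heq : (volume : Measure ℝ).restrict (Set.Icc r r₀)
            = volume.restrict (Set.Ioc r r₀) :=
          Measure.restrict_congr_set Ioc_ae_eq_Icc.symm
        rw [heq]
        filter_upwards [ae_restrict_mem measurableSet_Ioc] with t ht
        have := hκ t ht
        simp only [hg]
        linarith
      have step2 : (∫ t in r..r₀, (g t - Real.log (M (α * t)) / t))
          = (∫ u in α * r₀..r₀, g u) - ∫ u in α * r..r, g u := by
        rw [intervalIntegral.integral_sub hgint1 hg2int, hcov, hsplit]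
      calc (∫ t in r..r₀, κ t / t)
          ≤ (∫ u in α * r₀..r₀, g u) - ∫ u in α * r..r, g u := by rw [← step2]; exact step1
        _ ≤ Real.log (M r₀) * Real.log (1 / α)
            - Real.log (M (α * r)) * Real.log (1 / α) := by linarith
        _ = (Real.log (M r₀) - Real.log (M (α * r))) * Real.log (1 / α) := by ring
    · rw [intervalIntegral.integral_undef hint]
      nlinarith
  refine ⟨main, ?_⟩
  have h1 : (∫ t in r..r₀, κ t / t) ≤ -Real.log (M (α * r)) * Real.log (1 / α) := by
    nlinarith
  have h2 : Real.log (M (α * r)) ≤ -(1 / Real.log (1 / α)) * ∫ t in r..r₀, κ t / t := by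
    rw [neg_mul, le_neg, one_div, ← div_eq_inv_mul, div_le_iff₀ hLpos]
    linarith
  calc M (α * r) = Real.exp (Real.log (M (α * r))) := (Real.exp_log (hMpos _ hαrmem)).symm
    _ ≤ _ := Real.exp_le_exp.2 h2
end

section
/- Let 0 < α < 1, 0 < β, γ > 1, and 0 < ε < 1 with α + ε < 1. Suppose for t > 0 small the real numbers a(t) = log(1/t) / log(2/(β ε^γ t^γ)), b(t) = log(1/(α t + ε t)) / log(2/(β ε^γ t^γ)) satisfy a(t) < 1. Then (b(t) - a(t)) / (1 - a(t)) ≥ log(1/(α+ε)) / log((2+2ε)/(β ε^γ t^{γ-1})) for all sufficiently small t > 0. -/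
open Real Filter

theorem kappa_lower_bound_holder (α β γ ε : ℝ)
    (hα : 0 < α) (hα1 : α < 1) (hβ : 0 < β) (hγ : 1 < γ)
    (hε : 0 < ε) (hε1 : ε < 1) (hαε : α + ε < 1)
    (ha : ∀ᶠ t in nhdsWithin 0 (Set.Ioi (0:ℝ)),
      Real.log (1 / t) / Real.log (2 / (β * ε ^ γ * t ^ γ)) < 1) :
    ∀ᶠ t in nhdsWithin 0 (Set.Ioi (0:ℝ)),
      (Real.log (1 / (α * t + ε * t)) / Real.log (2 / (β * ε ^ γ * t ^ γ)) -
          Real.log (1 / t) / Real.log (2 / (β * ε ^ γ * t ^ γ))) /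
        (1 - Real.log (1 / t) / Real.log (2 / (β * ε ^ γ * t ^ γ))) ≥
      Real.log (1 / (α + ε)) / Real.log ((2 + 2 * ε) / (β * ε ^ γ * t ^ (γ - 1))) := by
  have hγ1 : (0:ℝ) < γ - 1 := by linarith
  have hεγ : 0 < ε ^ γ := Real.rpow_pos_of_pos hε γ
  have hc : 0 < β * ε ^ γ := mul_pos hβ hεγ
  have h1 : ∀ᶠ t in nhdsWithin 0 (Set.Ioi (0:ℝ)), β * ε ^ γ * t ^ (γ - 1) < 1 := by
    have hb' : Filter.Tendsto (fun t : ℝ => t ^ (γ - 1))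
        (nhdsWithin 0 (Set.Ioi 0)) (nhds 0) := by
      have hcont := (Real.continuousAt_rpow_const 0 (γ - 1) (Or.inr hγ1.le)).tendsto
      rw [Real.zero_rpow hγ1.ne'] at hcont
      exact hcont.mono_left nhdsWithin_le_nhds
    have h0 : Filter.Tendsto (fun t : ℝ => β * ε ^ γ * t ^ (γ - 1))
        (nhdsWithin 0 (Set.Ioi 0)) (nhds 0) := by
      have := hb'.const_mul (β * ε ^ γ)
      simpa using this
    exact h0.eventually_lt_const one_pos
  have h2 : Set.Ioo (0:ℝ) 1 ∈ nhdsWithin 0 (Set.Ioi (0:ℝ)) :=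
    Ioo_mem_nhdsGT_of_mem (by constructor <;> norm_num)
  filter_upwards [ha, h1, h2] with t hat h1t ht
  obtain ⟨ht0, ht1⟩ := ht
  have htγ1 : 0 < t ^ (γ - 1) := Real.rpow_pos_of_pos ht0 _
  have hX0 : 0 < β * ε ^ γ * t ^ (γ - 1) := by positivity
  have htγ : t ^ γ = t ^ (γ - 1) * t := by
    rw [← Real.rpow_add_one ht0.ne' (γ - 1)]
    ring_nf
  have htγ0 : 0 < t ^ γ := Real.rpow_pos_of_pos ht0 _
  have hY0 : 0 < β * ε ^ γ * t ^ γ := by positivity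
  have hYlt : β * ε ^ γ * t ^ γ < 1 := by
    rw [htγ]
    nlinarith [hX0, h1t, ht1, ht0]
  have hL : 0 < Real.log (2 / (β * ε ^ γ * t ^ γ)) :=
    Real.log_pos ((one_lt_div hY0).mpr (by linarith))
  have hD1 : 0 < Real.log (2 / (β * ε ^ γ * t ^ (γ - 1))) :=
    Real.log_pos ((one_lt_div hX0).mpr (by linarith))
  set L := Real.log (2 / (β * ε ^ γ * t ^ γ)) with hLdef
  have hLA : Real.log (1 / t) < L := (div_lt_one hL).mp hat
  have hkey : L - Real.log (1 / t) = Real.log (2 / (β * ε ^ γ * t ^ (γ - 1))) := by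
    rw [hLdef, ← Real.log_div (by positivity) (by positivity)]
    congr 1
    rw [htγ]
    field_simp
  have hnum : Real.log (1 / (α * t + ε * t)) - Real.log (1 / t)
      = Real.log (1 / (α + ε)) := by
    have hsum : α * t + ε * t = (α + ε) * t := by ring
    rw [hsum, ← Real.log_div (by positivity) (by positivity)]
    congr 1
    have hαε0 : (0:ℝ) < α + ε := by linarith
    field_simp
  have hDpos : 0 < L - Real.log (1 / t) := by linarith
  have hexpr : (Real.log (1 / (α * t + ε * t)) / L - Real.log (1 / t) / L) /
      (1 - Real.log (1 / t) / L)
      = Real.log (1 / (α + ε)) / Real.log (2 / (β * ε ^ γ * t ^ (γ - 1))) := by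
    rw [div_sub_div_same, ← hkey]
    have h1' : 1 - Real.log (1 / t) / L = (L - Real.log (1 / t)) / L := by
      field_simp
    rw [h1', hnum]
    field_simp
  rw [hexpr]
  have hnum0 : 0 ≤ Real.log (1 / (α + ε)) := by
    apply Real.log_nonneg
    rw [le_div_iff₀ (by linarith)]
    linarith
  have hDle : Real.log (2 / (β * ε ^ γ * t ^ (γ - 1)))
      ≤ Real.log ((2 + 2 * ε) / (β * ε ^ γ * t ^ (γ - 1))) := by
    apply Real.log_le_log (by positivity)
    gcongr
    linarith
  exact div_le_div_of_nonneg_left hnum0 hD1 hDle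
end

section
/- Let g : ℝ^m → ℝ be Hölder continuous of order β ∈ (0,1] with constant c, let E = {(x,s) ∈ ℝ^m × ℝ : s ≤ g(x)} and for t > 0 let F_t = {(x,s) : s ≥ g(x) + t}. Then the Euclidean distance between E and F_t is at least min(t/2, (2c)^{-1/β} t^{1/β}). -/
open Real

theorem graph_sets_distance (m : ℕ) (g : EuclideanSpace ℝ (Fin m) → ℝ) (β c t : ℝ)
    (hβ : β ∈ Set.Ioc (0:ℝ) 1) (hc : 0 < c)
    (hg : ∀ x y, |g x - g y| ≤ c * ‖x - y‖ ^ β)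
    (ht : 0 < t) :
    ∀ p ∈ {z : WithLp 2 (EuclideanSpace ℝ (Fin m) × ℝ) |
        ((WithLp.equiv 2 _) z).2 ≤ g ((WithLp.equiv 2 _) z).1},
      ∀ q ∈ {z : WithLp 2 (EuclideanSpace ℝ (Fin m) × ℝ) |
        ((WithLp.equiv 2 _) z).2 ≥ g ((WithLp.equiv 2 _) z).1 + t},
        dist p q ≥ min (t / 2) ((2 * c) ^ (-(1 / β)) * t ^ (1 / β)) := by
  obtain ⟨hβ0, hβ1⟩ := hβ
  intro p hp q hq
  simp only [Set.mem_setOf_eq] at hp hq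
  set d := dist p q with hd
  have hdnn : 0 ≤ d := dist_nonneg
  have hdist : d = √(dist (WithLp.equiv 2 _ p).1 (WithLp.equiv 2 _ q).1 ^ 2 +
      dist (WithLp.equiv 2 _ p).2 (WithLp.equiv 2 _ q).2 ^ 2) :=
    WithLp.prod_dist_eq_of_L2 p q
  set a := dist (WithLp.equiv 2 _ p).1 (WithLp.equiv 2 _ q).1 with ha
  set b := dist (WithLp.equiv 2 _ p).2 (WithLp.equiv 2 _ q).2 with hb
  have hann : 0 ≤ a := dist_nonneg
  have hbnn : 0 ≤ b := dist_nonneg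
  have h1 : a ≤ d := by
    rw [hdist]
    calc a = √(a ^ 2) := (Real.sqrt_sq hann).symm
      _ ≤ √(a ^ 2 + b ^ 2) := Real.sqrt_le_sqrt (by nlinarith)
  have h2 : b ≤ d := by
    rw [hdist]
    calc b = √(b ^ 2) := (Real.sqrt_sq hbnn).symm
      _ ≤ √(a ^ 2 + b ^ 2) := Real.sqrt_le_sqrt (by nlinarith)
  -- key inequality: d ≥ t - c * d ^ β
  have hgpq : |g ((WithLp.equiv 2 _ p).1) - g ((WithLp.equiv 2 _ q).1)| ≤ c * d ^ β := by
    refine (hg _ _).trans ?_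
    have : ‖(WithLp.equiv 2 _ p).1 - (WithLp.equiv 2 _ q).1‖ ≤ d := by
      rw [← dist_eq_norm]; exact h1
    exact mul_le_mul_of_nonneg_left (Real.rpow_le_rpow (norm_nonneg _) this hβ0.le) hc.le
  have hsnd : b ≥ (WithLp.equiv 2 _ q).2 - (WithLp.equiv 2 _ p).2 := by
    rw [hb, Real.dist_eq, abs_sub_comm]; exact le_abs_self _
  have hkey : t - c * d ^ β ≤ d := by
    have habs := abs_le.mp hgpq
    have := hq
    calc t - c * d ^ β ≤ (WithLp.equiv 2 _ q).2 - (WithLp.equiv 2 _ p).2 := by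
          have := habs.1
          linarith [hp, hq]
      _ ≤ b := hsnd
      _ ≤ d := h2
  by_cases hcase : c * d ^ β ≤ t / 2
  · exact le_trans (min_le_left _ _) (by linarith)
  · refine le_trans (min_le_right _ _) ?_
    push_neg at hcase
    have h2c : (0:ℝ) < 2 * c := by linarith
    have hdb : (t / (2 * c)) < d ^ β := by
      rw [div_lt_iff₀ h2c]; linarith
    have hrw : (2 * c) ^ (-(1 / β)) * t ^ (1 / β) = (t / (2 * c)) ^ (1 / β) := by
      rw [Real.div_rpow ht.le h2c.le, Real.rpow_neg h2c.le]
      ring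
    rw [hrw]
    have : (t / (2 * c)) ^ (1 / β) ≤ (d ^ β) ^ (1 / β) :=
      Real.rpow_le_rpow (by positivity) hdb.le (by positivity)
    have heq : (d ^ β) ^ (1 / β) = d := by
      rw [← Real.rpow_mul hdnn, mul_one_div, div_self hβ0.ne', Real.rpow_one]
    rw [heq] at this
    exact this
end
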